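/- Let M_Q = (q_{jα}) ∈ ℂ^{n×n} be a nonzero matrix and define Q : U(n) → ℂ by Q(z) = Σ_{j,α} q_{jα}·z_{jα}. Then Q(z)² + Σ_{Z∈B} Q(z·Z)² = 0 for every z ∈ U(n) (i.e. Q² + κ(Q,Q) = 0 on U(n)) if and only if any two columns of the matrix M_Q are linearly dependent. -/

import Mathlib

/-- The matrix `E_rs` with `(r,s)`-entry `1` and all other entries `0`. -/
noncomputable def EE (n : ℕ) (r s : Fin n) : Matrix (Fin n) (Fin n) ℂ :=
  Matrix.single r s 1

/-- `X_rs = (E_rs + E_sr)/√2`. -/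
noncomputable def XX (n : ℕ) (r s : Fin n) : Matrix (Fin n) (Fin n) ℂ :=
  (Real.sqrt 2 : ℂ)⁻¹ • (EE n r s + EE n s r)

/-- `Y_rs = (E_rs - E_sr)/√2`. -/
noncomputable def YY (n : ℕ) (r s : Fin n) : Matrix (Fin n) (Fin n) ℂ :=
  (Real.sqrt 2 : ℂ)⁻¹ • (EE n r s - EE n s r)

/-- `D_r = E_rr`. -/
noncomputable def DD (n : ℕ) (r : Fin n) : Matrix (Fin n) (Fin n) ℂ :=
  Matrix.single r r 1

/-- The Laplace–Beltrami operator `τ(F)(z) = Σ_{Z ∈ B} F(z·Z·Z)` of the bi-invariant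
metric on `U(n)`, where `B = {iX_rs, Y_rs (r<s), iD_r}` is the canonical orthonormal
basis of `u(n)`. -/
noncomputable def tauU (n : ℕ) (F : Matrix (Fin n) (Fin n) ℂ → ℂ)
    (z : Matrix (Fin n) (Fin n) ℂ) : ℂ :=
  (∑ r : Fin n, ∑ s : Fin n, if r < s then
      F (z * (Complex.I • XX n r s) * (Complex.I • XX n r s))
        + F (z * YY n r s * YY n r s)
    else 0)
  + ∑ r : Fin n, F (z * (Complex.I • DD n r) * (Complex.I • DD n r))

/-- The conformality operator `κ(F,G)(z) = Σ_{Z ∈ B} F(z·Z)·G(z·Z)` on `U(n)`. -/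
noncomputable def kappaU (n : ℕ) (F G : Matrix (Fin n) (Fin n) ℂ → ℂ)
    (z : Matrix (Fin n) (Fin n) ℂ) : ℂ :=
  (∑ r : Fin n, ∑ s : Fin n, if r < s then
      F (z * (Complex.I • XX n r s)) * G (z * (Complex.I • XX n r s))
        + F (z * YY n r s) * G (z * YY n r s)
    else 0)
  + ∑ r : Fin n, F (z * (Complex.I • DD n r)) * G (z * (Complex.I • DD n r))

section Aux

open Matrix

variable {n : ℕ}

/-! ### The bilinear form `S` -/

/-- The symmetric bilinear form `S(x,y) = tr(xᵀq)tr(yᵀq) - tr(xᵀq yᵀq)`. -/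
noncomputable def Smap (q x y : Matrix (Fin n) (Fin n) ℂ) : ℂ :=
  (xᵀ * q).trace * (yᵀ * q).trace - ((xᵀ * q) * (yᵀ * q)).trace

variable (q : Matrix (Fin n) (Fin n) ℂ)

lemma S_symm (x y : Matrix (Fin n) (Fin n) ℂ) : Smap q x y = Smap q y x := by
  unfold Smap
  rw [Matrix.trace_mul_comm (xᵀ * q)]
  ring_nf

lemma S_add_right (z w w' : Matrix (Fin n) (Fin n) ℂ) :
    Smap q z (w + w') = Smap q z w + Smap q z w' := by
  unfold Smap
  simp [Matrix.transpose_add, Matrix.add_mul, Matrix.mul_add, Matrix.trace_add]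
  ring

lemma S_sub_right (z w w' : Matrix (Fin n) (Fin n) ℂ) :
    Smap q z (w - w') = Smap q z w - Smap q z w' := by
  unfold Smap
  simp [Matrix.transpose_sub, Matrix.sub_mul, Matrix.mul_sub, Matrix.trace_sub]
  ring

lemma S_smul_right (z w : Matrix (Fin n) (Fin n) ℂ) (c : ℂ) :
    Smap q z (c • w) = c * Smap q z w := by
  unfold Smap
  simp [Matrix.transpose_smul, Matrix.smul_mul, Matrix.mul_smul, Matrix.trace_smul, smul_eq_mul]
  ring

lemma S_zero_right (z : Matrix (Fin n) (Fin n) ℂ) : Smap q z 0 = 0 := by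
  unfold Smap; simp

lemma S_sum_right {ι : Type*} (z : Matrix (Fin n) (Fin n) ℂ) (t : Finset ι)
    (g : ι → Matrix (Fin n) (Fin n) ℂ) :
    Smap q z (∑ i ∈ t, g i) = ∑ i ∈ t, Smap q z (g i) := by
  classical
  induction t using Finset.induction_on with
  | empty => simpa using S_zero_right q z
  | insert _ _ h ih => rw [Finset.sum_insert h, Finset.sum_insert h, S_add_right, ih]

lemma S_add_left (z w w' : Matrix (Fin n) (Fin n) ℂ) :
    Smap q (w + w') z = Smap q w z + Smap q w' z := by
  rw [S_symm, S_add_right, S_symm q z w, S_symm q z w']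

lemma S_sub_left (z w w' : Matrix (Fin n) (Fin n) ℂ) :
    Smap q (w - w') z = Smap q w z - Smap q w' z := by
  rw [S_symm, S_sub_right, S_symm q z w, S_symm q z w']

lemma S_smul_left (z w : Matrix (Fin n) (Fin n) ℂ) (c : ℂ) :
    Smap q (c • w) z = c * Smap q w z := by
  rw [S_symm, S_smul_right, S_symm q z w]

lemma S_sum_left {ι : Type*} (z : Matrix (Fin n) (Fin n) ℂ) (t : Finset ι)
    (g : ι → Matrix (Fin n) (Fin n) ℂ) :
    Smap q (∑ i ∈ t, g i) z = ∑ i ∈ t, Smap q (g i) z := by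
  rw [S_symm, S_sum_right]
  exact Finset.sum_congr rfl fun i _ => S_symm q z (g i)

lemma traceE (a j : Fin n) (M : Matrix (Fin n) (Fin n) ℂ) :
    (Matrix.single a j (1:ℂ) * M).trace = M j a := by
  rw [Matrix.trace, Finset.sum_eq_single a]
  · simp
  · intro b _ hb; simp [Matrix.diag, Matrix.single_mul_apply_of_ne (h := hb)]
  · simp

lemma transposeE (a b : Fin n) :
    (Matrix.single a b (1:ℂ))ᵀ = (Matrix.single b a 1 : Matrix (Fin n) (Fin n) ℂ) := by
  ext i j
  simp [Matrix.single, Matrix.transpose_apply, and_comm]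

lemma S_basis (j a k b : Fin n) :
    Smap q (Matrix.single j a 1) (Matrix.single k b 1)
      = q j a * q k b - q j b * q k a := by
  unfold Smap
  rw [transposeE, transposeE, traceE, traceE]
  have h1 : Matrix.single a j (1:ℂ) * q * (Matrix.single b k 1 * q)
      = Matrix.single a j (1:ℂ) * (q * Matrix.single b k 1 * q) := by
    noncomm_ring
  rw [h1, traceE]
  have h2 : (q * Matrix.single b k (1:ℂ) * q) j a = q j b * q k a := by
    rw [Matrix.mul_apply, Finset.sum_eq_single k]
    · simp
    · intro m _ hm; simp [Matrix.mul_single_apply_of_ne (hbj := hm)]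
    · simp
  rw [h2]

/-! ### Evaluations of `Q` along the basis -/

lemma Qf_mul_E (z : Matrix (Fin n) (Fin n) ℂ) (r s : Fin n) :
    (∑ j : Fin n, ∑ α : Fin n, q j α * (z * EE n r s) j α)
      = ∑ j : Fin n, z j r * q j s := by
  refine Finset.sum_congr rfl fun j _ => ?_
  rw [Finset.sum_eq_single s]
  · rw [EE, Matrix.mul_single_apply_same]; ring
  · intro b _ hb; simp [EE, Matrix.mul_single_apply_of_ne (hbj := hb)]
  · simp

lemma Qf_smul (c : ℂ) (w : Matrix (Fin n) (Fin n) ℂ) :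
    (∑ j : Fin n, ∑ α : Fin n, q j α * (c • w) j α)
      = c * ∑ j : Fin n, ∑ α : Fin n, q j α * w j α := by
  rw [Finset.mul_sum]
  refine Finset.sum_congr rfl fun j _ => ?_
  rw [Finset.mul_sum]
  refine Finset.sum_congr rfl fun a _ => ?_
  rw [Matrix.smul_apply, smul_eq_mul]
  ring

lemma Qf_add (w w' : Matrix (Fin n) (Fin n) ℂ) :
    (∑ j : Fin n, ∑ α : Fin n, q j α * (w + w') j α)
      = (∑ j : Fin n, ∑ α : Fin n, q j α * w j α)
        + ∑ j : Fin n, ∑ α : Fin n, q j α * w' j α := by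
  simp [Matrix.add_apply, mul_add, Finset.sum_add_distrib]

lemma Qf_sub (w w' : Matrix (Fin n) (Fin n) ℂ) :
    (∑ j : Fin n, ∑ α : Fin n, q j α * (w - w') j α)
      = (∑ j : Fin n, ∑ α : Fin n, q j α * w j α)
        - ∑ j : Fin n, ∑ α : Fin n, q j α * w' j α := by
  simp [Matrix.sub_apply, mul_sub, Finset.sum_sub_distrib]

lemma ev1 (z : Matrix (Fin n) (Fin n) ℂ) (r s : Fin n) :
    (∑ j : Fin n, ∑ α : Fin n, q j α * (z * (Complex.I • XX n r s)) j α)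
      = Complex.I * ((Real.sqrt 2 : ℂ)⁻¹
          * ((∑ j : Fin n, z j r * q j s) + ∑ j : Fin n, z j s * q j r)) := by
  rw [mul_smul_comm, Qf_smul, XX, mul_smul_comm, Qf_smul, mul_add, Qf_add,
    Qf_mul_E, Qf_mul_E]

lemma ev2 (z : Matrix (Fin n) (Fin n) ℂ) (r s : Fin n) :
    (∑ j : Fin n, ∑ α : Fin n, q j α * (z * YY n r s) j α)
      = (Real.sqrt 2 : ℂ)⁻¹
          * ((∑ j : Fin n, z j r * q j s) - ∑ j : Fin n, z j s * q j r) := by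
  rw [YY, mul_smul_comm, Qf_smul, mul_sub, Qf_sub, Qf_mul_E, Qf_mul_E]

lemma ev3 (z : Matrix (Fin n) (Fin n) ℂ) (r : Fin n) :
    (∑ j : Fin n, ∑ α : Fin n, q j α * (z * (Complex.I • DD n r)) j α)
      = Complex.I * ∑ j : Fin n, z j r * q j r := by
  rw [mul_smul_comm, Qf_smul]
  have h : DD n r = EE n r r := rfl
  rw [h, Qf_mul_E]

lemma sqrt2_inv_sq : (Real.sqrt 2 : ℂ)⁻¹ * (Real.sqrt 2 : ℂ)⁻¹ = 2⁻¹ := by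
  rw [← mul_inv]
  norm_cast
  rw [Real.mul_self_sqrt (by norm_num : (0:ℝ) ≤ 2)]
  norm_num

lemma sym_sum (g : Fin n → Fin n → ℂ) (hg : ∀ r s, g r s = g s r) :
    ∑ r : Fin n, ∑ s : Fin n, g r s
      = (∑ r : Fin n, ∑ s : Fin n, if r < s then 2 * g r s else 0) + ∑ r : Fin n, g r r := by
  have key : ∀ r s : Fin n, g r s =
      (if r < s then g r s else 0) + (if s < r then g r s else 0)
        + (if r = s then g r s else 0) := by
    intro r s
    rcases lt_trichotomy r s with h | h | h
    · simp [h, not_lt_of_gt h, h.ne]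
    · simp [h, lt_irrefl]
    · simp [h, not_lt_of_gt h, (ne_of_lt h).symm]
  calc ∑ r : Fin n, ∑ s : Fin n, g r s
      = ∑ r : Fin n, ∑ s : Fin n, ((if r < s then g r s else 0) + (if s < r then g r s else 0)
          + (if r = s then g r s else 0)) := by
        refine Finset.sum_congr rfl fun r _ => Finset.sum_congr rfl fun s _ => key r s
    _ = (∑ r : Fin n, ∑ s : Fin n, if r < s then g r s else 0)
        + (∑ r : Fin n, ∑ s : Fin n, if s < r then g r s else 0)
        + ∑ r : Fin n, ∑ s : Fin n, if r = s then g r s else 0 := by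
        simp [Finset.sum_add_distrib]
    _ = (∑ r : Fin n, ∑ s : Fin n, if r < s then g r s else 0)
        + (∑ r : Fin n, ∑ s : Fin n, if r < s then g r s else 0)
        + ∑ r : Fin n, g r r := by
        congr 1
        · congr 1
          rw [Finset.sum_comm]
          refine Finset.sum_congr rfl fun r _ => Finset.sum_congr rfl fun s _ => ?_
          rcases lt_or_ge r s with h | h
          · simp [h, hg r s]
          · simp [not_lt_of_ge h]
        · refine Finset.sum_congr rfl fun r _ => ?_
          rw [Finset.sum_ite_eq (Finset.univ) r (fun s => g r s)]
          simp
    _ = _ := by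
        rw [← Finset.sum_add_distrib]
        congr 1
        refine Finset.sum_congr rfl fun r _ => ?_
        rw [← Finset.sum_add_distrib]
        refine Finset.sum_congr rfl fun s _ => ?_
        split <;> ring

lemma kappa_eq (z : Matrix (Fin n) (Fin n) ℂ) :
    kappaU n (fun w => ∑ j : Fin n, ∑ α : Fin n, q j α * w j α)
        (fun w => ∑ j : Fin n, ∑ α : Fin n, q j α * w j α) z
      = -(∑ r : Fin n, ∑ s : Fin n,
          (∑ j : Fin n, z j r * q j s) * (∑ k : Fin n, z k s * q k r)) := by
  unfold kappaU
  have h1 : ∀ r s : Fin n,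
      ((∑ j : Fin n, ∑ α : Fin n, q j α * (z * (Complex.I • XX n r s)) j α)
        * (∑ j : Fin n, ∑ α : Fin n, q j α * (z * (Complex.I • XX n r s)) j α)
       + (∑ j : Fin n, ∑ α : Fin n, q j α * (z * YY n r s) j α)
        * (∑ j : Fin n, ∑ α : Fin n, q j α * (z * YY n r s) j α))
      = -(2 * ((∑ j : Fin n, z j r * q j s) * (∑ k : Fin n, z k s * q k r))) := by
    intro r s
    rw [ev1 q z r s, ev2 q z r s]
    have hI : Complex.I * Complex.I = -1 := Complex.I_mul_I
    linear_combination ((Real.sqrt 2 : ℂ)⁻¹ * (Real.sqrt 2 : ℂ)⁻¹)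
        * ((∑ j : Fin n, z j r * q j s) + ∑ j : Fin n, z j s * q j r)^2 * hI
      + (-4 * ((∑ j : Fin n, z j r * q j s) * (∑ j : Fin n, z j s * q j r))) * sqrt2_inv_sq
  have h3 : ∀ r : Fin n,
      (∑ j : Fin n, ∑ α : Fin n, q j α * (z * (Complex.I • DD n r)) j α)
        * (∑ j : Fin n, ∑ α : Fin n, q j α * (z * (Complex.I • DD n r)) j α)
      = -((∑ j : Fin n, z j r * q j r) * (∑ j : Fin n, z j r * q j r)) := by
    intro r
    rw [ev3 q z r]
    have hI : Complex.I * Complex.I = -1 := Complex.I_mul_I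
    linear_combination ((∑ j : Fin n, z j r * q j r) * (∑ j : Fin n, z j r * q j r)) * hI
  calc (∑ r : Fin n, ∑ s : Fin n, if r < s then _ else 0) + ∑ r : Fin n, _
      = (∑ r : Fin n, ∑ s : Fin n, if r < s then
            -(2 * ((∑ j : Fin n, z j r * q j s) * (∑ k : Fin n, z k s * q k r))) else 0)
        + ∑ r : Fin n, -((∑ j : Fin n, z j r * q j r) * (∑ j : Fin n, z j r * q j r)) := by
        congr 1
        · refine Finset.sum_congr rfl fun r _ => Finset.sum_congr rfl fun s _ => ?_
          split
          · exact h1 r s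
          · rfl
        · exact Finset.sum_congr rfl fun r _ => h3 r
    _ = _ := by
        rw [sym_sum (g := fun r s => (∑ j : Fin n, z j r * q j s) * (∑ k : Fin n, z k s * q k r))
            (fun r s => by ring)]
        rw [neg_add]
        congr 1
        · rw [← Finset.sum_neg_distrib]
          refine Finset.sum_congr rfl fun r _ => ?_
          rw [← Finset.sum_neg_distrib]
          refine Finset.sum_congr rfl fun s _ => ?_
          split <;> ring
        · rw [← Finset.sum_neg_distrib]

lemma trace_tq (z : Matrix (Fin n) (Fin n) ℂ) :
    (zᵀ * q).trace = ∑ r : Fin n, ∑ j : Fin n, z j r * q j r := by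
  simp [Matrix.trace, Matrix.diag, Matrix.mul_apply, Matrix.transpose_apply]

lemma trace_tq2 (z w : Matrix (Fin n) (Fin n) ℂ) :
    ((zᵀ * q) * (wᵀ * q)).trace
      = ∑ r : Fin n, ∑ s : Fin n,
          (∑ j : Fin n, z j r * q j s) * (∑ k : Fin n, w k s * q k r) := by
  simp [Matrix.trace, Matrix.diag, Matrix.mul_apply, Matrix.transpose_apply]

lemma Qf_diag (z : Matrix (Fin n) (Fin n) ℂ) :
    (∑ j : Fin n, ∑ α : Fin n, q j α * z j α)
      = ∑ r : Fin n, ∑ j : Fin n, z j r * q j r := by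
  rw [Finset.sum_comm]
  exact Finset.sum_congr rfl fun r _ => Finset.sum_congr rfl fun j _ => mul_comm _ _

/-- The main pointwise identity: `Q(z)² + κ(Q,Q)(z) = S(z,z)`. -/
lemma key_identity (z : Matrix (Fin n) (Fin n) ℂ) :
    (∑ j : Fin n, ∑ α : Fin n, q j α * z j α) ^ 2
      + kappaU n (fun w => ∑ j : Fin n, ∑ α : Fin n, q j α * w j α)
          (fun w => ∑ j : Fin n, ∑ α : Fin n, q j α * w j α) z
      = Smap q z z := by
  rw [kappa_eq, Qf_diag]
  unfold Smap
  rw [trace_tq, trace_tq2]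
  ring

end Aux
section Unitaries

open Matrix

variable {n : ℕ}

local notation "E" => fun (a b : Fin n) => (Matrix.single a b (1:ℂ) : Matrix (Fin n) (Fin n) ℂ)

lemma starEg (a b : Fin n) (c : ℂ) :
    star (Matrix.single a b c)
      = (Matrix.single b a (starRingEnd ℂ c) : Matrix (Fin n) (Fin n) ℂ) := by
  ext i j
  simp [Matrix.star_apply, Matrix.single, and_comm, apply_ite (starRingEnd ℂ)]

lemma starE (a b : Fin n) :
    star (Matrix.single a b (1:ℂ))
      = (Matrix.single b a (1:ℂ) : Matrix (Fin n) (Fin n) ℂ) := by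
  simp [starEg]

lemma starIE (a b : Fin n) : star (Complex.I • E a b) = -(Complex.I • E b a) := by
  rw [star_smul, starE]
  rw [show star Complex.I = -Complex.I by simp [Complex.star_def, Complex.conj_I]]
  rw [neg_smul]

lemma mulE_same (a b c : Fin n) : E a b * E b c = E a c := by
  simpa using Matrix.single_mul_single_same (c := (1:ℂ)) a b c 1

lemma mulE_ne {b c : Fin n} (h : b ≠ c) (a d : Fin n) : E a b * E c d = 0 :=
  Matrix.single_mul_single_of_ne (c := (1:ℂ)) a b c h 1

/-- The Hermitian unitary reflection `1 - 2E_kk`. -/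
noncomputable def RR (k : Fin n) : Matrix (Fin n) (Fin n) ℂ := 1 - (2:ℂ) • E k k

lemma RR_star (k : Fin n) : star (RR k) = RR k := by
  have h2 : starRingEnd ℂ 2 = 2 := by rw [Complex.conj_ofNat]
  simp [RR, star_sub, star_smul, starEg, h2]

lemma RR_unitary (k : Fin n) : RR k ∈ Matrix.unitaryGroup (Fin n) ℂ := by
  rw [Matrix.mem_unitaryGroup_iff, RR_star]
  have hEE : E k k * E k k = E k k := mulE_same k k k
  rw [RR]
  simp only [sub_mul, mul_sub, one_mul, mul_one, smul_mul_assoc, mul_smul_comm, hEE, smul_smul]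
  module

/-- The Hermitian unitary transposition-like matrix `E_kl + E_lk + (1 - E_kk - E_ll)`. -/
noncomputable def TT (k l : Fin n) : Matrix (Fin n) (Fin n) ℂ :=
  E k l + E l k + (1 - E k k - E l l)

/-- The Hermitian unitary matrix `iE_kl - iE_lk + (1 - E_kk - E_ll)`. -/
noncomputable def UU (k l : Fin n) : Matrix (Fin n) (Fin n) ℂ :=
  Complex.I • E k l - Complex.I • E l k + (1 - E k k - E l l)

lemma TT_star (k l : Fin n) : star (TT k l) = TT k l := by
  simp [TT, star_add, star_sub, starE]
  abel

lemma TT_unitary {k l : Fin n} (hkl : k ≠ l) : TT k l ∈ Matrix.unitaryGroup (Fin n) ℂ := by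
  rw [Matrix.mem_unitaryGroup_iff, TT_star, TT]
  simp only [add_mul, mul_add, sub_mul, mul_sub, one_mul, mul_one,
    mulE_same, mulE_ne hkl, mulE_ne (Ne.symm hkl), sub_zero, zero_sub, add_zero, zero_add]
  abel

lemma UU_star (k l : Fin n) : star (UU k l) = UU k l := by
  rw [UU, star_add, star_sub, starIE, starIE, star_sub, star_sub, star_one, starE, starE]
  abel

lemma UU_unitary {k l : Fin n} (hkl : k ≠ l) : UU k l ∈ Matrix.unitaryGroup (Fin n) ℂ := by
  rw [Matrix.mem_unitaryGroup_iff, UU_star, UU]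
  simp only [add_mul, mul_add, sub_mul, mul_sub, one_mul, mul_one,
    smul_mul_assoc, mul_smul_comm, smul_smul, Complex.I_mul_I,
    mulE_same, mulE_ne hkl, mulE_ne (Ne.symm hkl), smul_zero, sub_zero, zero_sub, add_zero,
    zero_add, neg_smul, one_smul, neg_neg, smul_add, smul_sub, smul_neg]
  module

lemma one_unitary : (1 : Matrix (Fin n) (Fin n) ℂ) ∈ Matrix.unitaryGroup (Fin n) ℂ := by
  rw [Matrix.mem_unitaryGroup_iff]; simp

lemma E_comb_diag (k : Fin n) : (Matrix.single k k 1 : Matrix (Fin n) (Fin n) ℂ) = (2⁻¹ : ℂ) • ((1 : Matrix (Fin n) (Fin n) ℂ) - RR k) := by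
  rw [RR]
  module

lemma E_comb_offdiag {k l : Fin n} (hkl : k ≠ l) :
    (Matrix.single k l 1 : Matrix (Fin n) (Fin n) ℂ) = (2⁻¹ : ℂ) • TT k l + (-(Complex.I/2)) • UU k l
      + ((Complex.I - 1)/4) • RR k + ((Complex.I - 1)/4) • RR l := by
  have hIhalf : (-(Complex.I/2)) • (Complex.I • E k l - Complex.I • E l k)
      = (2⁻¹:ℂ) • E k l - (2⁻¹:ℂ) • E l k := by
    rw [smul_sub, smul_smul, smul_smul]
    have h : -(Complex.I/2) * Complex.I = 2⁻¹ := by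
      have hI := Complex.I_mul_I
      linear_combination (-(1:ℂ)/2) * hI
    rw [h]
  rw [TT, UU, RR, RR, smul_add (-(Complex.I/2)), hIhalf]
  module

/-- For `z` unitary and `w` Hermitian unitary, `(z + i z w)/√2` is unitary. -/
lemma v_unitary {z w : Matrix (Fin n) (Fin n) ℂ}
    (hz : z ∈ Matrix.unitaryGroup (Fin n) ℂ) (hw : w ∈ Matrix.unitaryGroup (Fin n) ℂ)
    (hws : star w = w) :
    ((Real.sqrt 2 : ℂ)⁻¹ • (z + Complex.I • (z * w))) ∈ Matrix.unitaryGroup (Fin n) ℂ := by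
  rw [Matrix.mem_unitaryGroup_iff]
  have hz1 : z * star z = 1 := Matrix.mem_unitaryGroup_iff.mp hz
  have hw1 : w * w = 1 := by
    have h := Matrix.mem_unitaryGroup_iff.mp hw
    rwa [hws] at h
  have hc : star ((Real.sqrt 2 : ℂ)⁻¹) = (Real.sqrt 2 : ℂ)⁻¹ := by
    simp [Complex.star_def, Complex.conj_ofReal]
  have hstar : star (z + Complex.I • (z * w)) = star z - Complex.I • (w * star z) := by
    rw [star_add, star_smul, Matrix.star_mul, hws]
    rw [show star Complex.I = -Complex.I by simp [Complex.star_def, Complex.conj_I]]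
    rw [neg_smul]
    abel
  rw [star_smul, hc, hstar]
  rw [smul_mul_assoc, mul_smul_comm, smul_smul, sqrt2_inv_sq]
  have hww : ∀ M : Matrix (Fin n) (Fin n) ℂ, w * (w * M) = M := by
    intro M
    rw [← mul_assoc, hw1, one_mul]
  simp only [mul_add, add_mul, mul_sub, sub_mul, smul_mul_assoc, mul_smul_comm, smul_smul,
    Complex.I_mul_I, neg_smul, one_smul, mul_assoc, hww, hz1, smul_add, smul_sub]
  module

end Unitaries
section Main

open Matrix

variable {n : ℕ} (q : Matrix (Fin n) (Fin n) ℂ)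

/-- Step 1: vanishing of `S(z, zw)` for `z` unitary and `w` Hermitian unitary. -/
lemma L1 (H : ∀ z ∈ Matrix.unitaryGroup (Fin n) ℂ, Smap q z z = 0)
    {z w : Matrix (Fin n) (Fin n) ℂ}
    (hz : z ∈ Matrix.unitaryGroup (Fin n) ℂ) (hw : w ∈ Matrix.unitaryGroup (Fin n) ℂ)
    (hws : star w = w) : Smap q z (z * w) = 0 := by
  have hzw : z * w ∈ Matrix.unitaryGroup (Fin n) ℂ := mul_mem hz hw
  have hv := H _ (v_unitary hz hw hws)
  rw [S_smul_left, S_smul_right, S_add_left, S_add_right, S_add_right,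
    S_smul_left, S_smul_right, S_smul_left, S_smul_right] at hv
  rw [H z hz, H _ hzw, S_symm q (z * w) z] at hv
  have h2 := sqrt2_inv_sq
  set c := (Real.sqrt 2 : ℂ)⁻¹ with hc
  set S := Smap q z (z * w) with hS
  have hv' : Complex.I * S = 0 := by
    have hexp : c * (c * (0 + Complex.I * S + (Complex.I * S + Complex.I * (Complex.I * 0))))
        = 2 * (c * c) * (Complex.I * S) := by ring
    rw [hexp, h2] at hv
    have h2ne : (2:ℂ) * 2⁻¹ ≠ 0 := by norm_num
    exact (mul_eq_zero.mp hv).resolve_left h2ne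
  rcases mul_eq_zero.mp hv' with h | h
  · exact absurd h Complex.I_ne_zero
  · exact h

/-- Step 2: vanishing of `S(z, z E_kl)` for `z` unitary. -/
lemma L2 (H : ∀ z ∈ Matrix.unitaryGroup (Fin n) ℂ, Smap q z z = 0)
    {z : Matrix (Fin n) (Fin n) ℂ} (hz : z ∈ Matrix.unitaryGroup (Fin n) ℂ) (k l : Fin n) :
    Smap q z (z * Matrix.single k l 1) = 0 := by
  by_cases hkl : k = l
  · subst hkl
    rw [E_comb_diag k, mul_smul_comm, S_smul_right, mul_sub, S_sub_right, mul_one]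
    rw [H z hz, L1 q H hz (RR_unitary k) (RR_star k)]
    ring
  · rw [E_comb_offdiag hkl]
    rw [mul_add, mul_add, mul_add, mul_smul_comm, mul_smul_comm, mul_smul_comm, mul_smul_comm]
    rw [S_add_right, S_add_right, S_add_right, S_smul_right, S_smul_right, S_smul_right,
      S_smul_right]
    rw [L1 q H hz (TT_unitary hkl) (TT_star k l), L1 q H hz (UU_unitary hkl) (UU_star k l),
      L1 q H hz (RR_unitary k) (RR_star k), L1 q H hz (RR_unitary l) (RR_star l)]
    ring

/-- Step 3: vanishing of `S(z, y)` for `z` unitary and arbitrary `y`. -/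
lemma L3 (H : ∀ z ∈ Matrix.unitaryGroup (Fin n) ℂ, Smap q z z = 0)
    {z : Matrix (Fin n) (Fin n) ℂ} (hz : z ∈ Matrix.unitaryGroup (Fin n) ℂ)
    (y : Matrix (Fin n) (Fin n) ℂ) : Smap q z y = 0 := by
  have hz1 : z * star z = 1 := Matrix.mem_unitaryGroup_iff.mp hz
  have hy : y = z * (star z * y) := by rw [← mul_assoc, hz1, one_mul]
  rw [hy, Matrix.matrix_eq_sum_single (star z * y)]
  rw [Finset.mul_sum, S_sum_right]
  refine Finset.sum_eq_zero fun i _ => ?_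
  rw [Finset.mul_sum, S_sum_right]
  refine Finset.sum_eq_zero fun j _ => ?_
  rw [show Matrix.single i j ((star z * y) i j)
      = ((star z * y) i j) • (Matrix.single i j 1 : Matrix (Fin n) (Fin n) ℂ) by
    rw [Matrix.smul_single]; norm_num]
  rw [mul_smul_comm, S_smul_right, L2 q H hz i j, mul_zero]

/-- Step 4: vanishing of `S` identically. -/
lemma L4 (H : ∀ z ∈ Matrix.unitaryGroup (Fin n) ℂ, Smap q z z = 0)
    (x y : Matrix (Fin n) (Fin n) ℂ) : Smap q x y = 0 := by
  have hE : ∀ k l : Fin n, Smap q (Matrix.single k l 1) y = 0 := by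
    intro k l
    by_cases hkl : k = l
    · subst hkl
      rw [E_comb_diag k, S_smul_left, S_sub_left]
      rw [L3 q H one_unitary y, L3 q H (RR_unitary k) y]
      ring
    · rw [E_comb_offdiag hkl, S_add_left, S_add_left, S_add_left,
        S_smul_left, S_smul_left, S_smul_left, S_smul_left]
      rw [L3 q H (TT_unitary hkl) y, L3 q H (UU_unitary hkl) y,
        L3 q H (RR_unitary k) y, L3 q H (RR_unitary l) y]
      ring
  rw [Matrix.matrix_eq_sum_single x, S_sum_left]
  refine Finset.sum_eq_zero fun i _ => ?_
  rw [S_sum_left]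
  refine Finset.sum_eq_zero fun j _ => ?_
  rw [show Matrix.single i j (x i j)
      = (x i j) • (Matrix.single i j 1 : Matrix (Fin n) (Fin n) ℂ) by
    rw [Matrix.smul_single]; norm_num]
  rw [S_smul_left, hE i j, mul_zero]

/-- The minors of `q` vanish. -/
lemma minors (H : ∀ z ∈ Matrix.unitaryGroup (Fin n) ℂ, Smap q z z = 0)
    (j k a b : Fin n) : q j a * q k b = q j b * q k a := by
  have h := L4 q H (Matrix.single j a 1) (Matrix.single k b 1)
  rw [S_basis] at h
  exact sub_eq_zero.mp h

/-- Conversely, if the minors vanish then `S(z,z) = 0` for every `z`. -/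
lemma smap_zero_of_minors (hm : ∀ j k a b : Fin n, q j a * q k b = q j b * q k a)
    (z : Matrix (Fin n) (Fin n) ℂ) : Smap q z z = 0 := by
  unfold Smap
  rw [trace_tq, trace_tq2, sub_eq_zero]
  rw [Finset.sum_mul_sum]
  refine Finset.sum_congr rfl fun r _ => Finset.sum_congr rfl fun s _ => ?_
  rw [Finset.sum_mul_sum, Finset.sum_mul_sum]
  refine Finset.sum_congr rfl fun j _ => Finset.sum_congr rfl fun k _ => ?_
  have := hm j k r s
  linear_combination z j r * z k s * (hm j k r s)

end Main

/-- For a nonzero matrix `M_Q = (q_{jα})` and `Q(z) = Σ q_{jα} z_{jα}` on `U(n)`,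
the identity `Q² + κ(Q,Q) = 0` holds on `U(n)` if and only if any two columns of
`M_Q` are linearly dependent. -/
theorem stmt_1 (n : ℕ) (hn : 0 < n) (q : Matrix (Fin n) (Fin n) ℂ) (hq : q ≠ 0) :
    (∀ z ∈ Matrix.unitaryGroup (Fin n) ℂ,
        (∑ j : Fin n, ∑ α : Fin n, q j α * z j α) ^ 2
          + kappaU n (fun w => ∑ j : Fin n, ∑ α : Fin n, q j α * w j α)
              (fun w => ∑ j : Fin n, ∑ α : Fin n, q j α * w j α) z = 0) ↔
    (∀ α β : Fin n, ∃ c d : ℂ, (c ≠ 0 ∨ d ≠ 0) ∧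
        ∀ j : Fin n, c * q j α + d * q j β = 0) := by
  constructor
  · intro H α β
    have HS : ∀ z ∈ Matrix.unitaryGroup (Fin n) ℂ, Smap q z z = 0 := by
      intro z hz
      rw [← key_identity q z]
      exact H z hz
    have hm := minors q HS
    by_cases hzero : ∀ j : Fin n, q j α = 0
    · exact ⟨1, 0, Or.inl one_ne_zero, fun j => by rw [hzero j]; ring⟩
    · push_neg at hzero
      obtain ⟨j0, hj0⟩ := hzero
      refine ⟨q j0 β, -q j0 α, Or.inr (neg_ne_zero.mpr hj0), fun j => ?_⟩
      linear_combination hm j0 j β α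
  · intro H z hz
    rw [key_identity q z]
    have hm : ∀ j k a b : Fin n, q j a * q k b = q j b * q k a := by
      intro j k a b
      obtain ⟨c, d, hcd, h⟩ := H a b
      have h1 := h j
      have h2 := h k
      rcases hcd with hc | hd
      · have hz0 : c * (q j a * q k b - q j b * q k a) = 0 := by
          linear_combination q k b * h1 - q j b * h2
        rcases mul_eq_zero.mp hz0 with h' | h'
        · exact absurd h' hc
        · exact sub_eq_zero.mp h'
      · have hz0 : d * (q j a * q k b - q j b * q k a) = 0 := by
          linear_combination q j a * h2 - q k a * h1
        rcases mul_eq_zero.mp hz0 with h' | h'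
        · exact absurd h' hd
        · exact sub_eq_zero.mp h'
    exact smap_zero_of_minors q hm z
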